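/- Suppose T is independent of (W, C), T > 0 almost surely, and S(s) > 0 for all s ∈ (0, t] for a fixed t > 0. Then P(T ≤ t and W ≤ T ≤ C) = ∫_{(0, t]} g(s) dμ_T(s) = E[∫_{(0, t]} 1{W ≤ s ≤ X} dΛ_T(s)]; that is, the observed-failure counting process N(t) = 1{T ≤ t, W ≤ T ≤ C} minus its compensator ∫_{(0, t]} 1{W ≤ s ≤ X} dΛ_T(s) has mean zero. -/

import Mathlib

open MeasureTheory ProbabilityTheory

/-- If `T` is independent of `(W, C)`, `T > 0` a.s., and `S > 0` on `(0, t]`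
for a fixed `t > 0`, then
`P(T ≤ t, W ≤ T ≤ C) = ∫_{(0,t]} g(s) dμ_T(s) = E[∫_{(0,t]} 1{W ≤ s ≤ X} dΛ_T(s)]`;
i.e. the observed-failure counting process minus its compensator has mean zero. -/
theorem counting_process_compensator_mean_zero
    {Ω : Type*} [MeasurableSpace Ω] (μ : Measure Ω) [IsProbabilityMeasure μ]
    (T C W : Ω → ℝ) (hT : Measurable T) (hC : Measurable C) (hW : Measurable W)
    (hindep : IndepFun T (fun ω => (W ω, C ω)) μ)
    (hTpos : ∀ᵐ ω ∂μ, 0 < T ω)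
    (S g : ℝ → ℝ)
    (hS : ∀ s, S s = (μ {ω | s ≤ T ω}).toReal)
    (hg : ∀ s, g s = (μ {ω | W ω ≤ s ∧ s ≤ C ω}).toReal)
    (ΛT : Measure ℝ)
    (hΛT : ΛT = (Measure.map T μ).withDensity (fun s => ENNReal.ofReal (1 / S s)))
    (t : ℝ) (ht : 0 < t) (hSpos : ∀ s ∈ Set.Ioc 0 t, 0 < S s) :
    (μ {ω | T ω ≤ t ∧ W ω ≤ T ω ∧ T ω ≤ C ω}).toReal
        = ∫ s in Set.Ioc 0 t, g s ∂(Measure.map T μ)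
      ∧ ∫ s in Set.Ioc 0 t, g s ∂(Measure.map T μ)
        = ∫ ω, (∫ s in Set.Ioc 0 t,
            Set.indicator (Set.Icc (W ω) (min (T ω) (C ω))) (fun _ => (1 : ℝ)) s ∂ΛT) ∂μ := by
  have hWC : Measurable fun ω => (W ω, C ω) := hW.prodMk hC
  set ν := Measure.map T μ with hν
  set ρ := Measure.map (fun ω => (W ω, C ω)) μ with hρ
  haveI : IsProbabilityMeasure ν := Measure.isProbabilityMeasure_map hT.aemeasurable
  haveI : IsProbabilityMeasure ρ := Measure.isProbabilityMeasure_map hWC.aemeasurable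
  have hπ : Measure.map (fun ω => (T ω, (W ω, C ω))) μ = ν.prod ρ :=
    (indepFun_iff_map_prod_eq_prod_map_map hT.aemeasurable hWC.aemeasurable).mp hindep
  -- basic measurable sets
  have hBms : ∀ s : ℝ, MeasurableSet {q : ℝ × ℝ | q.1 ≤ s ∧ s ≤ q.2} := fun s =>
    (measurableSet_le measurable_fst measurable_const).inter
      (measurableSet_le measurable_const measurable_snd)
  have hBsetms : MeasurableSet {p : ℝ × (ℝ × ℝ) | p.2.1 ≤ p.1 ∧ p.1 ≤ p.2.2} :=
    (measurableSet_le measurable_snd.fst measurable_fst).inter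
      (measurableSet_le measurable_fst measurable_snd.snd)
  have hρB : ∀ s : ℝ, ρ {q : ℝ × ℝ | q.1 ≤ s ∧ s ≤ q.2} = ENNReal.ofReal (g s) := by
    intro s
    rw [hg, hρ, Measure.map_apply hWC (hBms s), ENNReal.ofReal_toReal (measure_ne_top μ _)]
    rfl
  have hνIci : ∀ s : ℝ, ν (Set.Ici s) = ENNReal.ofReal (S s) := by
    intro s
    rw [hS, hν, Measure.map_apply hT measurableSet_Ici, ENNReal.ofReal_toReal (measure_ne_top μ _)]
    rfl
  -- measurability of g
  have hρBm : Measurable fun s : ℝ => ρ {q : ℝ × ℝ | q.1 ≤ s ∧ s ≤ q.2} := by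
    exact measurable_measure_prodMk_left (ν := ρ) hBsetms
  have hgm : Measurable g := by
    have : g = fun s => (ρ {q : ℝ × ℝ | q.1 ≤ s ∧ s ≤ q.2}).toReal := by
      funext s
      rw [hρB s, ENNReal.toReal_ofReal]
      rw [hg]; exact ENNReal.toReal_nonneg
    rw [this]
    exact hρBm.ennreal_toReal
  -- S is antitone, hence measurable
  have hSanti : Antitone S := by
    intro a b hab
    rw [hS, hS]
    exact ENNReal.toReal_mono (measure_ne_top μ _)
      (measure_mono fun ω h => le_trans hab h)
  have hSm : Measurable S := hSanti.measurable
  set k : ℝ → ENNReal := fun s => ENNReal.ofReal (1 / S s) with hk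
  have hkm : Measurable k := (measurable_const.div hSm).ennreal_ofReal
  -- the central lintegral
  set L : ENNReal := ∫⁻ s in Set.Ioc 0 t, ENNReal.ofReal (g s) ∂ν with hL
  -- middle term equals L.toReal
  have hmid : ∫ s in Set.Ioc 0 t, g s ∂ν = L.toReal := by
    rw [hL]
    exact integral_eq_lintegral_of_nonneg_ae
      (Filter.Eventually.of_forall fun s => by rw [hg]; exact ENNReal.toReal_nonneg)
      hgm.aestronglyMeasurable
  -- first term equals L.toReal
  have hfirst : (μ {ω | T ω ≤ t ∧ W ω ≤ T ω ∧ T ω ≤ C ω}).toReal = L.toReal := by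
    have hA : MeasurableSet {p : ℝ × (ℝ × ℝ) | p.1 ∈ Set.Ioc 0 t ∧ p.2.1 ≤ p.1 ∧ p.1 ≤ p.2.2} :=
      (measurable_fst measurableSet_Ioc).inter hBsetms
    have hE : μ {ω | T ω ≤ t ∧ W ω ≤ T ω ∧ T ω ≤ C ω}
        = μ ((fun ω => (T ω, (W ω, C ω))) ⁻¹'
            {p : ℝ × (ℝ × ℝ) | p.1 ∈ Set.Ioc 0 t ∧ p.2.1 ≤ p.1 ∧ p.1 ≤ p.2.2}) := by
      apply measure_congr
      rw [Filter.eventuallyEq_set]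
      filter_upwards [hTpos] with ω hω
      simp only [Set.mem_setOf_eq, Set.mem_preimage, Set.mem_Ioc]
      tauto
    rw [hE, ← Measure.map_apply (hT.prodMk hWC) hA, hπ, Measure.prod_apply hA]
    have hsec : ∀ s : ℝ,
        ρ (Prod.mk s ⁻¹' {p : ℝ × (ℝ × ℝ) | p.1 ∈ Set.Ioc 0 t ∧ p.2.1 ≤ p.1 ∧ p.1 ≤ p.2.2})
          = (Set.Ioc 0 t).indicator (fun s => ρ {q : ℝ × ℝ | q.1 ≤ s ∧ s ≤ q.2}) s := by
      intro s
      by_cases hs : s ∈ Set.Ioc 0 t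
      · rw [Set.indicator_of_mem hs]
        congr 1
        ext q
        simp only [Set.mem_preimage, Set.mem_setOf_eq]
        tauto
      · rw [Set.indicator_of_notMem hs]
        convert measure_empty
        · ext q
          simp only [Set.mem_preimage, Set.mem_setOf_eq, Set.mem_empty_iff_false, iff_false]
          tauto
        · infer_instance
    rw [lintegral_congr hsec, lintegral_indicator measurableSet_Ioc]
    congr 1
    exact setLIntegral_congr_fun measurableSet_Ioc
      (fun s _ => (hρB s).symm) |>.symm ▸ rfl
  refine ⟨hfirst.trans hmid.symm, ?_⟩
  rw [hmid]
  -- the joint indicator set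
  set D : Set ((ℝ × (ℝ × ℝ)) × ℝ) :=
    {q | q.1.2.1 ≤ q.2 ∧ q.2 ≤ q.1.1 ∧ q.2 ≤ q.1.2.2} with hD
  have hDms : MeasurableSet D :=
    (measurableSet_le measurable_fst.snd.fst measurable_snd).inter
      ((measurableSet_le measurable_snd measurable_fst.fst).inter
        (measurableSet_le measurable_snd measurable_fst.snd.snd))
  set f : (ℝ × (ℝ × ℝ)) × ℝ → ENNReal := fun q => k q.2 * D.indicator 1 q with hf
  have hfm : Measurable f :=
    (hkm.comp measurable_snd).mul (measurable_one.indicator hDms)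
  set J : ℝ × (ℝ × ℝ) → ENNReal := fun p => ∫⁻ s in Set.Ioc 0 t, f (p, s) ∂ν with hJ
  have hJm : Measurable J := hfm.lintegral_prod_right'
  have hind : ∀ (p : ℝ × (ℝ × ℝ)) (s : ℝ),
      ENNReal.ofReal ((Set.Icc p.2.1 (min p.1 p.2.2)).indicator (fun _ => (1:ℝ)) s)
        = Set.indicator D 1 (p, s) := by
    intro p s
    by_cases hmem : s ∈ Set.Icc p.2.1 (min p.1 p.2.2)
    · rw [Set.indicator_of_mem hmem, Set.indicator_of_mem]
      · simp
      · rcases hmem with ⟨h1, h2⟩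
        rw [le_min_iff] at h2
        exact ⟨h1, h2.1, h2.2⟩
    · rw [Set.indicator_of_notMem hmem, Set.indicator_of_notMem]
      · simp
      · intro hcon
        exact hmem ⟨hcon.1, le_min_iff.mpr ⟨hcon.2.1, hcon.2.2⟩⟩
  -- inner integral in terms of J
  have hIω : ∀ ω, (∫ s in Set.Ioc 0 t,
      Set.indicator (Set.Icc (W ω) (min (T ω) (C ω))) (fun _ => (1 : ℝ)) s ∂ΛT)
      = (J (T ω, (W ω, C ω))).toReal := by
    intro ω
    rw [hΛT]
    have h1 : ∫ s in Set.Ioc 0 t,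
        Set.indicator (Set.Icc (W ω) (min (T ω) (C ω))) (fun _ => (1:ℝ)) s ∂(ν.withDensity k)
        = (∫⁻ s in Set.Ioc 0 t, ENNReal.ofReal
            (Set.indicator (Set.Icc (W ω) (min (T ω) (C ω))) (fun _ => (1:ℝ)) s)
            ∂(ν.withDensity k)).toReal :=
      integral_eq_lintegral_of_nonneg_ae
        (Filter.Eventually.of_forall fun s => Set.indicator_nonneg (fun _ _ => zero_le_one) s)
        ((measurable_const.indicator measurableSet_Icc).aestronglyMeasurable)
    rw [h1, restrict_withDensity measurableSet_Ioc,
      lintegral_withDensity_eq_lintegral_mul _ hkm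
        ((measurable_const.indicator measurableSet_Icc).ennreal_ofReal)]
    congr 1
    refine setLIntegral_congr_fun measurableSet_Ioc
      (fun s _ => ?_)
    simp only [Pi.mul_apply]
    rw [hind (T ω, (W ω, C ω)) s]
  -- J is finite
  have hJfin : ∀ p : ℝ × (ℝ × ℝ), J p ≠ ⊤ := by
    intro p
    have hb : J p ≤ ∫⁻ _ in Set.Ioc 0 t, ENNReal.ofReal (1 / S t) ∂ν := by
      refine lintegral_mono_ae ?_
      filter_upwards [ae_restrict_mem measurableSet_Ioc] with s hs
      have h1 : k s ≤ ENNReal.ofReal (1 / S t) := by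
        apply ENNReal.ofReal_le_ofReal
        exact one_div_le_one_div_of_le (hSpos t ⟨ht, le_refl t⟩) (hSanti hs.2)
      have h2 : D.indicator (1 : ((ℝ × ℝ × ℝ) × ℝ) → ENNReal) (p, s) ≤ 1 := by
        classical
        by_cases h : (p, s) ∈ D <;> simp [h]
      calc f (p, s) = k s * D.indicator 1 (p, s) := rfl
        _ ≤ ENNReal.ofReal (1 / S t) * 1 := mul_le_mul' h1 h2
        _ = ENNReal.ofReal (1 / S t) := mul_one _
    refine ne_top_of_le_ne_top ?_ hb
    rw [setLIntegral_const]
    exact ENNReal.mul_ne_top ENNReal.ofReal_ne_top (measure_ne_top _ _)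
  -- rewrite the outer integral
  have houter : ∫ ω, (∫ s in Set.Ioc 0 t,
      Set.indicator (Set.Icc (W ω) (min (T ω) (C ω))) (fun _ => (1 : ℝ)) s ∂ΛT) ∂μ
      = (∫⁻ ω, J (T ω, (W ω, C ω)) ∂μ).toReal := by
    rw [integral_congr_ae (Filter.Eventually.of_forall hIω)]
    have hcomp : Measurable fun ω => J (T ω, (W ω, C ω)) := hJm.comp (hT.prodMk hWC)
    rw [integral_eq_lintegral_of_nonneg_ae
      (Filter.Eventually.of_forall fun ω => ENNReal.toReal_nonneg)
      hcomp.ennreal_toReal.aestronglyMeasurable]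
    congr 1
    exact lintegral_congr fun ω => ENNReal.ofReal_toReal (hJfin _)
  have hswap : ∫⁻ ω, J (T ω, (W ω, C ω)) ∂μ = L := by
    have h1 : ∫⁻ ω, J (T ω, (W ω, C ω)) ∂μ = ∫⁻ p, J p ∂(ν.prod ρ) := by
      rw [← hπ, lintegral_map hJm (hT.prodMk hWC)]
    rw [h1, hJ]
    rw [lintegral_lintegral_swap (hfm.aemeasurable)]
    have hinner : ∀ s : ℝ, (∫⁻ p, f (p, s) ∂(ν.prod ρ))
        = k s * (ENNReal.ofReal (S s) * ENNReal.ofReal (g s)) := by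
      intro s
      have hseteq : (fun p : ℝ × (ℝ × ℝ) => D.indicator (1 : ((ℝ × ℝ × ℝ) × ℝ) → ENNReal) (p, s))
          = (Set.Ici s ×ˢ {q : ℝ × ℝ | q.1 ≤ s ∧ s ≤ q.2}).indicator 1 := by
        funext p
        have : (p, s) ∈ D ↔ p ∈ Set.Ici s ×ˢ {q : ℝ × ℝ | q.1 ≤ s ∧ s ≤ q.2} := by
          simp only [hD, Set.mem_setOf_eq, Set.mem_prod, Set.mem_Ici]
          tauto
        by_cases h : (p, s) ∈ D
        · rw [Set.indicator_of_mem h, Set.indicator_of_mem (this.mp h)]; rfl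
        · rw [Set.indicator_of_notMem h, Set.indicator_of_notMem (fun hc => h (this.mpr hc))]
      calc ∫⁻ p, f (p, s) ∂(ν.prod ρ)
          = k s * ∫⁻ p, D.indicator (1 : ((ℝ × ℝ × ℝ) × ℝ) → ENNReal) (p, s) ∂(ν.prod ρ) :=
            by
            have hm : Measurable fun p : ℝ × (ℝ × ℝ) =>
                D.indicator (1 : ((ℝ × ℝ × ℝ) × ℝ) → ENNReal) (p, s) :=
              (measurable_one.indicator hDms).comp (measurable_id.prodMk measurable_const)
            have heq : (fun p : ℝ × (ℝ × ℝ) => f (p, s))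
                = fun p : ℝ × (ℝ × ℝ) =>
                  k s * D.indicator (1 : ((ℝ × ℝ × ℝ) × ℝ) → ENNReal) (p, s) := rfl
            rw [heq]
            exact lintegral_const_mul _ hm
        _ = k s * (ν.prod ρ) (Set.Ici s ×ˢ {q : ℝ × ℝ | q.1 ≤ s ∧ s ≤ q.2}) := by
            rw [hseteq, lintegral_indicator_one
              (measurableSet_Ici.prod (hBms s))]
        _ = k s * (ν (Set.Ici s) * ρ {q : ℝ × ℝ | q.1 ≤ s ∧ s ≤ q.2}) := by
            rw [Measure.prod_prod]
        _ = k s * (ENNReal.ofReal (S s) * ENNReal.ofReal (g s)) := by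
            rw [hνIci s, hρB s]
    rw [lintegral_congr hinner, hL]
    refine setLIntegral_congr_fun measurableSet_Ioc
      (fun s hs => ?_)
    have hS0 : 0 < S s := hSpos s hs
    rw [← mul_assoc, hk, ← ENNReal.ofReal_mul (by positivity), one_div_mul_cancel (ne_of_gt hS0),
      ENNReal.ofReal_one, one_mul]
  rw [houter, hswap]
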